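/- Let G be a transitive permutation group on [n] and f : [n] → [n] a transformation of rank n−1. Then there exists an idempotent transformation h : [n] → [n] of rank n−1 such that h lies in the transformation monoid generated by G ∪ {f}. -/

import Mathlib

open Finset

/-- The set of functions on `Fin n` arising from elements of the permutation group `G`. -/
def permSet {n : ℕ} (G : Subgroup (Equiv.Perm (Fin n))) : Set (Function.End (Fin n)) :=
  {h | ∃ g ∈ G, h = ⇑g}

/-- The transformation monoid generated by `G ∪ {f}`. -/
def genMon {n : ℕ} (G : Subgroup (Equiv.Perm (Fin n))) (f : Fin n → Fin n) :
    Submonoid (Function.End (Fin n)) :=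
  Submonoid.closure (permSet G ∪ {f})

/-- A permutation group is primitive if no subset `Δ` with `1 < |Δ| < n` is a block. -/
def IsPrimitive' {n : ℕ} (G : Subgroup (Equiv.Perm (Fin n))) : Prop :=
  ¬ ∃ Δ : Finset (Fin n), 1 < Δ.card ∧ Δ.card < n ∧
      ∀ g ∈ G, Δ.image ⇑g = Δ ∨ Disjoint (Δ.image ⇑g) Δ

/-- In a finite monoid, every element has an idempotent positive power. -/
lemma exists_idem_pow {M : Type*} [Monoid M] [Finite M] (w : M) :
    ∃ k, 1 ≤ k ∧ w ^ k * w ^ k = w ^ k := by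
  obtain ⟨i, j, hij, hpow⟩ := Finite.exists_ne_map_eq_of_infinite (fun k : ℕ => w ^ k)
  wlog hlt : i < j generalizing i j
  · exact this j i hij.symm hpow.symm (by omega)
  set m := j - i with hm
  have hm1 : 1 ≤ m := by omega
  have hstep : ∀ s, i ≤ s → w ^ s = w ^ (s + m) := by
    intro s hs
    have h1 : w ^ s = w ^ i * w ^ (s - i) := by
      rw [← pow_add]; congr 1; omega
    have h2 : w ^ (s + m) = w ^ j * w ^ (s - i) := by
      rw [← pow_add]; congr 1; omega
    rw [h1, h2, hpow]
  have hmul : ∀ t s, i ≤ s → w ^ s = w ^ (s + t * m) := by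
    intro t
    induction t with
    | zero => intro s hs; simp
    | succ t ih =>
      intro s hs
      have := hstep (s + t * m) (by omega)
      rw [ih s hs, this]; congr 1; ring
  refine ⟨(i + 1) * m, by nlinarith, ?_⟩
  rw [← pow_add]
  have := hmul (i + 1) ((i + 1) * m) (by nlinarith)
  rw [← this]

theorem exists_idempotent_in_genMon {n : ℕ} (G : Subgroup (Equiv.Perm (Fin n)))
    (hG : ∀ a b : Fin n, ∃ g ∈ G, g a = b)
    (f : Fin n → Fin n) (hf : (univ.image f).card = n - 1) :
    ∃ h : Fin n → Fin n, h ∈ genMon G f ∧ h ∘ h = h ∧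
      (univ.image h).card = n - 1 := by
  rcases Nat.eq_zero_or_pos n with hn0 | hn1
  · subst hn0
    exact ⟨id, one_mem _, rfl, by simp⟩
  have himgne : (univ.image f).Nonempty := by
    refine ⟨f ⟨0, hn1⟩, mem_image.2 ⟨⟨0, hn1⟩, mem_univ _, rfl⟩⟩
  have hn2 : 2 ≤ n := by
    have := card_pos.mpr himgne
    omega
  -- f is not injective
  have hninj : ¬ Function.Injective f := by
    intro h
    have := Finset.card_image_of_injective univ h
    rw [hf, card_univ, Fintype.card_fin] at this
    omega
  obtain ⟨a, b, hfab, hab⟩ := Function.not_injective_iff.mp hninj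
  -- a point missing from the image of f
  have hne : univ.image f ≠ univ := by
    intro h
    rw [h, card_univ, Fintype.card_fin] at hf
    omega
  obtain ⟨m, _, hm⟩ := Finset.exists_of_ssubset (Finset.ssubset_iff_subset_ne.mpr ⟨subset_univ _, hne⟩)
  obtain ⟨g, hgG, hgm⟩ := hG m a
  -- the map w = g ∘ f
  set w : Function.End (Fin n) := (⇑g : Fin n → Fin n) ∘ f with hw
  have hwmem : w ∈ genMon G f := by
    have h1 : (⇑g : Function.End (Fin n)) ∈ genMon G f :=
      Submonoid.subset_closure (Or.inl ⟨g, hgG, rfl⟩)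
    have h2 : (f : Function.End (Fin n)) ∈ genMon G f :=
      Submonoid.subset_closure (Or.inr rfl)
    exact mul_mem h1 h2
  set S : Finset (Fin n) := univ.erase a with hS
  have hScard : S.card = n - 1 := by
    rw [hS, card_erase_of_mem (mem_univ a), card_univ, Fintype.card_fin]
  have haw : a ∉ univ.image w := by
    intro hmem
    obtain ⟨x, -, hx⟩ := mem_image.mp hmem
    have : f x = m := g.injective (by rw [hgm]; exact hx)
    exact hm (mem_image.2 ⟨x, mem_univ _, this⟩)
  have hwcard : (univ.image w).card = n - 1 := by
    have : univ.image w = (univ.image f).image ⇑g := by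
      rw [hw, ← Finset.image_image]
    rw [this, Finset.card_image_of_injective _ g.injective, hf]
  have hwimg : univ.image w = S := by
    apply Finset.eq_of_subset_of_card_le
    · intro x hx
      exact Finset.mem_erase.mpr ⟨fun h => haw (h ▸ hx), mem_univ x⟩
    · rw [hScard, hwcard]
  have hbS : b ∈ S := Finset.mem_erase.mpr ⟨fun h => hab h.symm, mem_univ b⟩
  have hwab : w a = w b := by simp [hw, Function.comp, hfab]
  have hSimg : S.image w = S := by
    have huniv : (univ : Finset (Fin n)) = insert a S := by
      rw [hS, Finset.insert_erase (mem_univ a)]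
    have h1 : univ.image w = insert (w a) (S.image w) := by
      rw [huniv, Finset.image_insert]
    have h2 : w a ∈ S.image w := by
      rw [hwab]; exact mem_image.2 ⟨b, hbS, rfl⟩
    calc S.image w = univ.image w := by rw [h1, Finset.insert_eq_self.mpr h2]
      _ = S := hwimg
  -- images of powers
  have hpowimg : ∀ k : ℕ, S.image ((w ^ k : Function.End (Fin n)) : Fin n → Fin n) = S := by
    intro k
    induction k with
    | zero => exact Finset.image_id
    | succ k ih =>
      have hc : (w ^ (k + 1) : Function.End (Fin n)) =
          ((w ^ k : Function.End (Fin n)) ∘ (w : Fin n → Fin n) : Fin n → Fin n) := by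
        rw [pow_succ]; rfl
      rw [hc]
      have h3 := Finset.image_image (f := (w : Fin n → Fin n)) (g := ((w ^ k : Function.End (Fin n)) : Fin n → Fin n)) (s := S)
      rw [hSimg, ih] at h3
      exact h3.symm
  haveI : Finite (Function.End (Fin n)) := inferInstanceAs (Finite (Fin n → Fin n))
  obtain ⟨k, hk1, hkid⟩ := exists_idem_pow w
  refine ⟨((w ^ k : Function.End (Fin n)) : Fin n → Fin n), pow_mem hwmem k, hkid, ?_⟩
  have himg : univ.image ((w ^ k : Function.End (Fin n)) : Fin n → Fin n) = S := by
    apply Finset.Subset.antisymm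
    · intro x hx
      obtain ⟨y, -, hy⟩ := mem_image.mp hx
      obtain ⟨k', rfl⟩ : ∃ k', k = k' + 1 := ⟨k - 1, by omega⟩
      have hc : (w ^ (k' + 1) : Function.End (Fin n)) =
          ((w : Fin n → Fin n) ∘ (w ^ k' : Function.End (Fin n)) : Fin n → Fin n) := by
        rw [pow_succ']; rfl
      rw [← hy, hc]
      rw [← hwimg]
      exact mem_image.2 ⟨(w ^ k' : Function.End (Fin n)) y, mem_univ _, rfl⟩
    · rw [← hpowimg k]
      exact Finset.image_subset_image (subset_univ S)
  rw [himg, hScard]
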